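/- arXiv:2506.17625 — 7 statements merged into one kernel-verified Lean document; each statement's English description precedes it below -/
import Mathlib

section
/- Let F be a field and let f₁, f₂ ∈ F[X] be two distinct polynomials, each of degree at most d. Then the set of elements λ ∈ F such that f₁(λ) = f₂(λ) and f₁'(λ) = f₂'(λ) is finite and has cardinality at most ⌊d/2⌋. -/
open Polynomial

theorem stmt_0 {F : Type*} [Field F] (d : ℕ) (f₁ f₂ : F[X])
    (hne : f₁ ≠ f₂) (hd₁ : f₁.degree ≤ (d : WithBot ℕ)) (hd₂ : f₂.degree ≤ (d : WithBot ℕ)) :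
    {x : F | f₁.eval x = f₂.eval x ∧
        (derivative f₁).eval x = (derivative f₂).eval x}.Finite ∧
    {x : F | f₁.eval x = f₂.eval x ∧
        (derivative f₁).eval x = (derivative f₂).eval x}.ncard ≤ d / 2 := by
  classical
  set g := f₁ - f₂ with hg
  have hg0 : g ≠ 0 := sub_ne_zero.2 hne
  have hset : {x : F | f₁.eval x = f₂.eval x ∧
      (derivative f₁).eval x = (derivative f₂).eval x}
      = {x : F | 1 < g.rootMultiplicity x} := by
    ext x
    simp only [Set.mem_setOf_eq, one_lt_rootMultiplicity_iff_isRoot hg0]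
    simp only [Set.mem_setOf_eq, one_lt_rootMultiplicity_iff_isRoot hg0, IsRoot.def, hg,
      derivative_sub, eval_sub, sub_eq_zero]
  rw [hset]
  have hsub : {x : F | 1 < g.rootMultiplicity x} ⊆ ↑g.roots.toFinset := by
    intro x hx
    simp only [Multiset.mem_toFinset, mem_roots hg0, IsRoot.def, Finset.coe_sort_coe,
      Finset.mem_coe]
    have := (rootMultiplicity_pos hg0 (x := x)).1 (by simp only [Set.mem_setOf_eq] at hx; omega)
    rwa [IsRoot.def] at this
  have hfin : {x : F | 1 < g.rootMultiplicity x}.Finite :=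
    Set.Finite.subset g.roots.toFinset.finite_toSet hsub
  refine ⟨hfin, ?_⟩
  set T := hfin.toFinset with hT
  have hTsub : T ⊆ g.roots.toFinset := fun x hx => hsub (hfin.mem_toFinset.1 hx)
  have h1 : 2 * T.card ≤ ∑ x ∈ T, g.roots.count x := by
    have := Finset.card_nsmul_le_sum T (fun x => g.roots.count x) 2
      (fun x hx => by
        have hx' := hfin.mem_toFinset.1 hx
        simp only [Set.mem_setOf_eq] at hx'
        simp only [count_roots]
        omega)
    simpa [Nat.smul_one_eq_cast, smul_eq_mul, Nat.mul_comm] using this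
  have h2 : ∑ x ∈ T, g.roots.count x ≤ Multiset.card g.roots := by
    calc ∑ x ∈ T, g.roots.count x
        ≤ ∑ x ∈ g.roots.toFinset, g.roots.count x :=
          Finset.sum_le_sum_of_subset hTsub
      _ = Multiset.card g.roots := Multiset.toFinset_sum_count_eq _
  have h3 : Multiset.card g.roots ≤ g.natDegree := card_roots' g
  have h4 : g.natDegree ≤ d := by
    have : g.degree ≤ (d : WithBot ℕ) := le_trans (degree_sub_le _ _) (max_le hd₁ hd₂)
    exact natDegree_le_iff_degree_le.2 this
  have hcard : Set.ncard {x : F | 1 < g.rootMultiplicity x} = T.card := by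
    rw [← hfin.coe_toFinset, Set.ncard_coe_finset]
  omega
end

section
/- Let m, w, δ be positive integers with δ ≤ w ≤ m. Let 𝓕 be a family of subsets of an m-element set, each of cardinality exactly w, such that any two distinct members A, B ∈ 𝓕 satisfy |A ∩ B| ≤ w − δ (equivalently, their indicator vectors have Hamming distance at least 2δ). Then |𝓕| · C(w, w − δ + 1) ≤ C(m, w − δ + 1). -/
theorem stmt_2 (m w δ : ℕ) (hδ : 0 < δ) (hw : 0 < w) (hm : 0 < m)
    (hδw : δ ≤ w) (hwm : w ≤ m)
    (𝓕 : Finset (Finset (Fin m)))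
    (hcard : ∀ A ∈ 𝓕, A.card = w)
    (hint : ∀ A ∈ 𝓕, ∀ B ∈ 𝓕, A ≠ B → (A ∩ B).card ≤ w - δ) :
    𝓕.card * Nat.choose w (w - δ + 1) ≤ Nat.choose m (w - δ + 1) := by
  set k := w - δ + 1 with hk
  have hdisj : ∀ A ∈ 𝓕, ∀ B ∈ 𝓕, A ≠ B →
      Disjoint (A.powersetCard k) (B.powersetCard k) := by
    intro A hA B hB hAB
    rw [Finset.disjoint_left]
    intro S hSA hSB
    rw [Finset.mem_powersetCard] at hSA hSB
    have hsub : S ⊆ A ∩ B := Finset.subset_inter hSA.1 hSB.1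
    have h1 := Finset.card_le_card hsub
    have h2 := hint A hA B hB hAB
    omega
  have hcard2 : (𝓕.biUnion (fun A => A.powersetCard k)).card
      = 𝓕.card * Nat.choose w k := by
    rw [Finset.card_biUnion hdisj,
      Finset.sum_congr rfl (fun A hA => by
        rw [Finset.card_powersetCard, hcard A hA]),
      Finset.sum_const, smul_eq_mul]
  have hsub : 𝓕.biUnion (fun A => A.powersetCard k)
      ⊆ Finset.univ.powersetCard k := by
    intro S hS
    rw [Finset.mem_biUnion] at hS
    obtain ⟨A, hA, hSA⟩ := hS
    rw [Finset.mem_powersetCard] at hSA ⊢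
    exact ⟨Finset.subset_univ S, hSA.2⟩
  have h := Finset.card_le_card hsub
  rwa [hcard2, Finset.card_powersetCard, Finset.card_univ, Fintype.card_fin] at h
end

section
/- Let F be a field and let k, b, e be integers with 0 ≤ b < k and 1 ≤ e ≤ 2(k − b) − 2. Let λ₁, …, λ_k be pairwise distinct elements of F and let α_j, β_j ∈ F for j ∈ {1, …, k}. Let L be the set of polynomials f ∈ F[X] of degree at most e such that the number of indices j ∈ {1, …, k} with f(λ_j) = α_j and f'(λ_j) = β_j is at least k − b. Then L is finite and |L| · C(k − b, ⌊e/2⌋ + 1) ≤ C(k, ⌊e/2⌋ + 1). -/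
open Polynomial

lemma sq_dvd_of_root_root {F : Type*} [Field F] {p : F[X]} {a : F}
    (h1 : p.eval a = 0) (h2 : (derivative p).eval a = 0) :
    (X - C a) ^ 2 ∣ p := by
  obtain ⟨q, hq⟩ := dvd_iff_isRoot.mpr h1
  have hd : derivative p = q + (X - C a) * derivative q := by
    rw [hq, derivative_mul]
    simp
  have hqa : q.eval a = 0 := by
    have h2' := h2
    rw [hd] at h2'
    simpa using h2'
  obtain ⟨r, hr⟩ := dvd_iff_isRoot.mpr hqa
  exact ⟨r, by rw [hq, hr]; ring⟩

theorem stmt_5 {F : Type*} [Field F] (k b e : ℕ) (hb0 : 0 ≤ b) (hbk : b < k)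
    (he1 : 1 ≤ e) (he2 : e ≤ 2 * (k - b) - 2)
    (lam : Fin k → F) (hinj : Function.Injective lam) (α β : Fin k → F) :
    {f : F[X] | f.natDegree ≤ e ∧
      k - b ≤ {j : Fin k | f.eval (lam j) = α j ∧
        (derivative f).eval (lam j) = β j}.ncard}.Finite ∧
    {f : F[X] | f.natDegree ≤ e ∧
      k - b ≤ {j : Fin k | f.eval (lam j) = α j ∧
        (derivative f).eval (lam j) = β j}.ncard}.ncard
      * Nat.choose (k - b) (e / 2 + 1) ≤ Nat.choose k (e / 2 + 1) := by
  classical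
  set t := e / 2 + 1 with ht
  set Sf : F[X] → Finset (Fin k) := fun f =>
    Finset.univ.filter (fun j => f.eval (lam j) = α j ∧
      (derivative f).eval (lam j) = β j) with hSf
  have hncard : ∀ f : F[X],
      {j : Fin k | f.eval (lam j) = α j ∧ (derivative f).eval (lam j) = β j}.ncard
        = (Sf f).card := by
    intro f
    rw [Set.ncard_eq_toFinset_card', Set.toFinset_setOf]
  set L : Set F[X] := {f : F[X] | f.natDegree ≤ e ∧
      k - b ≤ {j : Fin k | f.eval (lam j) = α j ∧
        (derivative f).eval (lam j) = β j}.ncard} with hL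
  have htkb : t ≤ k - b := by omega
  -- key uniqueness lemma
  have key : ∀ f g : F[X], f.natDegree ≤ e → g.natDegree ≤ e →
      t ≤ (Sf f ∩ Sf g).card → f = g := by
    intro f g hf hg hcard
    by_contra hne
    have hp0 : f - g ≠ 0 := sub_ne_zero.mpr hne
    obtain ⟨T, hT, hTcard⟩ := Finset.exists_subset_card_eq hcard
    have hdvd : (∏ j ∈ T, (X - C (lam j)) ^ 2) ∣ f - g := by
      apply Finset.prod_dvd_of_coprime
      · intro i hi j hj hij
        exact (Polynomial.pairwise_coprime_X_sub_C hinj hij).pow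
      · intro j hj
        have hjm := hT hj
        have hjf := Finset.mem_filter.mp (Finset.mem_of_mem_inter_left hjm)
        have hjg := Finset.mem_filter.mp (Finset.mem_of_mem_inter_right hjm)
        apply sq_dvd_of_root_root
        · simp [hjf.2.1, hjg.2.1]
        · simp [hjf.2.2, hjg.2.2]
    have hdeg : (∏ j ∈ T, (X - C (lam j)) ^ 2).natDegree = 2 * t := by
      rw [Polynomial.natDegree_prod]
      · simp [Polynomial.natDegree_pow, Polynomial.natDegree_X_sub_C, hTcard,
          mul_comm]
      · intro j hj
        exact pow_ne_zero _ (Polynomial.X_sub_C_ne_zero _)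
    have hle := Polynomial.natDegree_le_of_dvd hdvd hp0
    have hsub : (f - g).natDegree ≤ e :=
      le_trans (Polynomial.natDegree_sub_le f g) (by omega)
    rw [hdeg] at hle
    omega
  have hmemS : ∀ f ∈ L, k - b ≤ (Sf f).card := by
    intro f hf
    have := hf.2
    rwa [hncard] at this
  have hinjS : Set.InjOn Sf L := by
    intro f hf g hg hSeq
    apply key f g hf.1 hg.1
    rw [hSeq, Finset.inter_self]
    exact le_trans htkb (hmemS g hg)
  have hLfin : L.Finite := Set.Finite.of_finite_image (Set.toFinite _) hinjS
  refine ⟨hLfin, ?_⟩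
  set Lf := hLfin.toFinset with hLf
  have hncardL : L.ncard = Lf.card := Set.ncard_eq_toFinset_card L hLfin
  set Φ : F[X] → Finset (Finset (Fin k)) := fun f => Finset.powersetCard t (Sf f)
    with hΦ
  have hdisj : ∀ f ∈ Lf, ∀ g ∈ Lf, f ≠ g → Disjoint (Φ f) (Φ g) := by
    intro f hf g hg hne
    rw [Finset.disjoint_left]
    intro A hAf hAg
    rw [hΦ, Finset.mem_powersetCard] at hAf hAg
    apply hne
    apply key f g (hLfin.mem_toFinset.mp hf).1 (hLfin.mem_toFinset.mp hg).1
    calc t = A.card := hAf.2.symm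
      _ ≤ (Sf f ∩ Sf g).card :=
        Finset.card_le_card (Finset.subset_inter hAf.1 hAg.1)
  calc L.ncard * Nat.choose (k - b) t
      = Lf.card * Nat.choose (k - b) t := by rw [hncardL]
    _ ≤ ∑ f ∈ Lf, (Φ f).card := by
        have := Finset.card_nsmul_le_sum Lf (fun f => (Φ f).card)
          (Nat.choose (k - b) t) ?_
        · simpa using this
        · intro f hf
          rw [hΦ]
          simp only [Finset.card_powersetCard]
          exact Nat.choose_le_choose t (hmemS f (hLfin.mem_toFinset.mp hf))
    _ = (Lf.biUnion Φ).card := (Finset.card_biUnion hdisj).symm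
    _ ≤ (Finset.powersetCard t (Finset.univ : Finset (Fin k))).card := by
        apply Finset.card_le_card
        intro A hA
        rw [Finset.mem_biUnion] at hA
        obtain ⟨f, hf, hAf⟩ := hA
        rw [hΦ, Finset.mem_powersetCard] at hAf
        rw [Finset.mem_powersetCard]
        exact ⟨Finset.subset_univ _, hAf.2⟩
    _ = Nat.choose k t := by
        rw [Finset.card_powersetCard, Finset.card_univ, Fintype.card_fin]
end

section
/- Let F be a field, let k ≥ 1 be an integer, and let (λ_j, α_j, β_j) ∈ F³ for j ∈ {1, …, k}. Let D, e be positive integers with 4·k·e ≤ (D + 1)², and set ρ = ⌊D/e⌋. Then there exist polynomials Q₀, Q₁, …, Q_ρ ∈ F[X], not all zero, with deg Q_s ≤ D − s·e for every s ∈ {0, …, ρ}, such that for every j ∈ {1, …, k}: (i) Σ_{s=0}^{ρ} Q_s(λ_j)·α_j^s = 0, and (ii) Σ_{s=1}^{ρ} s·Q_s(λ_j)·α_j^{s−1}·β_j + Σ_{s=0}^{ρ} Q_s'(λ_j)·α_j^s = 0. -/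
open Polynomial

private lemma aux_kernel_stmt7 {F : Type*} [Field F] {ι κ : Type*} [Fintype ι] [Fintype κ]
    [DecidableEq ι] (w : κ → ι → F) (h : Fintype.card κ < Fintype.card ι) :
    ∃ c : ι → F, c ≠ 0 ∧ ∀ j, ∑ p, w j p * c p = 0 := by
  let T : (ι → F) →ₗ[F] (κ → F) :=
    LinearMap.pi fun j => ∑ p, w j p • LinearMap.proj p
  have hT : ¬ Function.Injective T := by
    intro hinj
    have := LinearMap.finrank_le_finrank_of_injective hinj
    simp [Module.finrank_fintype_fun_eq_card] at this
    omega
  rw [Function.not_injective_iff] at hT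
  obtain ⟨a, b, hab, hne⟩ := hT
  refine ⟨a - b, sub_ne_zero.mpr hne, fun j => ?_⟩
  have h0 : T (a - b) = 0 := by rw [map_sub, hab, sub_self]
  have h2 := congrFun h0 j
  simpa [T, LinearMap.pi_apply, LinearMap.sum_apply, mul_comm] using h2

private lemma aux_count_stmt7 (k D e : ℕ) (hD : 0 < D) (he : 0 < e)
    (hcond : 4 * k * e ≤ (D + 1) ^ 2) :
    2 * k < ∑ s ∈ Finset.range (D / e + 1), (D - s * e + 1) := by
  set ρ := D / e with hρ
  set r := D % e with hr
  have hd : e * ρ + r = D := Nat.div_add_mod D e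
  have hre : r < e := Nat.mod_lt _ he
  have h1 : ∀ s ∈ Finset.range (ρ + 1), D - s * e + 1 = e * (ρ - s) + (r + 1) := by
    intro s hs
    simp only [Finset.mem_range] at hs
    have : s ≤ ρ := by omega
    have h2 : s * e ≤ e * ρ := by rw [mul_comm]; exact Nat.mul_le_mul_left e this
    rw [Nat.mul_sub, mul_comm e s]
    omega
  rw [Finset.sum_congr rfl h1, Finset.sum_add_distrib, ← Finset.mul_sum]
  have h3 : ∑ s ∈ Finset.range (ρ + 1), (ρ - s) = ∑ s ∈ Finset.range (ρ + 1), s := by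
    rw [← Finset.sum_range_reflect]
    exact Finset.sum_congr rfl fun s hs => by simp at hs; omega
  have h4 : (∑ s ∈ Finset.range (ρ + 1), s) * 2 = (ρ + 1) * ρ := by
    rw [Finset.sum_range_id_mul_two]; simp
  rw [h3, Finset.sum_const, Finset.card_range]
  set G := ∑ s ∈ Finset.range (ρ + 1), s
  simp only [smul_eq_mul]
  have hD2 : 4 * k * e ≤ (e * ρ + r + 1) ^ 2 := by rw [hd] at *; exact hcond
  nlinarith [sq_nonneg (e*ρ - (r+1)), Nat.one_le_iff_ne_zero.mpr (by omega : e ≠ 0), sq_nonneg e]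

theorem stmt_7 {F : Type*} [Field F] (k : ℕ) (hk : 1 ≤ k)
    (lam α β : Fin k → F) (D e : ℕ) (hD : 0 < D) (he : 0 < e)
    (hcond : 4 * k * e ≤ (D + 1) ^ 2) :
    ∃ Q : ℕ → F[X],
      (∃ s ≤ D / e, Q s ≠ 0) ∧
      (∀ s ≤ D / e, (Q s).degree ≤ ((D - s * e : ℕ) : WithBot ℕ)) ∧
      (∀ j : Fin k,
        (∑ s ∈ Finset.range (D / e + 1), (Q s).eval (lam j) * α j ^ s = 0) ∧
        ((∑ s ∈ Finset.Icc 1 (D / e),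
            (s : F) * (Q s).eval (lam j) * α j ^ (s - 1) * β j)
          + ∑ s ∈ Finset.range (D / e + 1),
              (derivative (Q s)).eval (lam j) * α j ^ s = 0)) := by
  set ρ := D / e with hρ
  -- the index type of unknown coefficients
  have hcard : Fintype.card (Fin k ⊕ Fin k)
      < Fintype.card ((s : Fin (ρ + 1)) × Fin (D - (s : ℕ) * e + 1)) := by
    rw [Fintype.card_sigma]
    simp only [Fintype.card_sum, Fintype.card_fin, Fintype.card_fin]
    calc k + k = 2 * k := by ring
    _ < ∑ s ∈ Finset.range (ρ + 1), (D - s * e + 1) := aux_count_stmt7 k D e hD he hcond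
    _ = ∑ s : Fin (ρ + 1), (D - (s : ℕ) * e + 1) := (Fin.sum_univ_eq_sum_range _ _).symm
  obtain ⟨c, hc0, hker⟩ := aux_kernel_stmt7
    (ι := (s : Fin (ρ + 1)) × Fin (D - (s : ℕ) * e + 1))
    (Sum.elim
      (fun j p => lam j ^ (p.2 : ℕ) * α j ^ (p.1 : ℕ))
      (fun j p => ((p.1 : ℕ) : F) * lam j ^ (p.2 : ℕ) * α j ^ ((p.1 : ℕ) - 1) * β j
        + ((p.2 : ℕ) : F) * lam j ^ ((p.2 : ℕ) - 1) * α j ^ (p.1 : ℕ)))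
    hcard
  set Qfin : Fin (ρ + 1) → F[X] :=
    fun s => ∑ i : Fin (D - (s : ℕ) * e + 1), C (c ⟨s, i⟩) * X ^ (i : ℕ) with hQfin
  set Q : ℕ → F[X] := fun s => if hs : s < ρ + 1 then Qfin ⟨s, hs⟩ else 0 with hQdef
  have hQ : ∀ s : Fin (ρ + 1), Q (s : ℕ) = Qfin s := by
    intro s; simp [hQdef, s.isLt, Nat.lt_succ_iff.mp s.isLt]
  have heval : ∀ (s : Fin (ρ + 1)) (x : F),
      (Qfin s).eval x = ∑ i : Fin (D - (s : ℕ) * e + 1), c ⟨s, i⟩ * x ^ (i : ℕ) := by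
    intro s x; simp [hQfin, eval_finset_sum]
  have hder : ∀ (s : Fin (ρ + 1)) (x : F),
      (derivative (Qfin s)).eval x
        = ∑ i : Fin (D - (s : ℕ) * e + 1), c ⟨s, i⟩ * ((i : ℕ) : F) * x ^ ((i : ℕ) - 1) := by
    intro s x
    simp [hQfin, derivative_sum, derivative_C_mul_X_pow, derivative_X_pow, eval_finset_sum, mul_assoc]
  refine ⟨Q, ?_, ?_, ?_⟩
  · -- nonzero
    obtain ⟨p, hp⟩ := Function.ne_iff.mp hc0
    refine ⟨(p.1 : ℕ), Nat.lt_succ_iff.mp p.1.isLt, ?_⟩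
    rw [hQ p.1]
    intro h0
    apply hp
    have := congrArg (fun q => q.coeff (p.2 : ℕ)) h0
    simpa [hQfin, finset_sum_coeff, coeff_C_mul, coeff_X_pow, Fin.val_eq_val] using this
  · -- degree
    intro s hs
    have hs' : s < ρ + 1 := Nat.lt_succ_of_le hs
    have : Q s = Qfin ⟨s, hs'⟩ := by simp [hQdef, hs', hs]
    rw [this]
    refine (degree_sum_le _ _).trans ?_
    rw [Finset.sup_le_iff]
    intro i _
    refine (degree_C_mul_X_pow_le _ _).trans ?_
    exact_mod_cast Nat.lt_succ_iff.mp i.isLt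
  · intro j
    constructor
    · -- first equation
      have e1 := hker (Sum.inl j)
      simp only [Sum.elim_inl] at e1
      calc ∑ s ∈ Finset.range (ρ + 1), (Q s).eval (lam j) * α j ^ s
          = ∑ s : Fin (ρ + 1), ∑ i : Fin (D - (s : ℕ) * e + 1),
              lam j ^ (i : ℕ) * α j ^ (s : ℕ) * c ⟨s, i⟩ := by
            rw [Finset.sum_range]
            refine Finset.sum_congr rfl fun s _ => ?_
            rw [hQ s, heval, Finset.sum_mul]
            exact Finset.sum_congr rfl fun i _ => by ring
        _ = 0 := by
            rw [← e1, ← Finset.univ_sigma_univ, Finset.sum_sigma]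
    · -- second equation
      have e2 := hker (Sum.inr j)
      simp only [Sum.elim_inr] at e2
      have hIcc : ∑ s ∈ Finset.Icc 1 ρ, (s : F) * (Q s).eval (lam j) * α j ^ (s - 1) * β j
          = ∑ s ∈ Finset.range (ρ + 1), (s : F) * (Q s).eval (lam j) * α j ^ (s - 1) * β j := by
        rw [Finset.range_eq_Ico, Finset.sum_eq_sum_Ico_succ_bot (Nat.succ_pos ρ),
          Nat.succ_eq_add_one, Finset.Ico_add_one_right_eq_Icc]
        simp
      rw [hIcc, ← Finset.sum_add_distrib]
      calc ∑ s ∈ Finset.range (ρ + 1),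
            ((s : F) * (Q s).eval (lam j) * α j ^ (s - 1) * β j
              + (derivative (Q s)).eval (lam j) * α j ^ s)
          = ∑ s : Fin (ρ + 1), ∑ i : Fin (D - (s : ℕ) * e + 1),
              (((s : ℕ) : F) * lam j ^ (i : ℕ) * α j ^ ((s : ℕ) - 1) * β j
                + ((i : ℕ) : F) * lam j ^ ((i : ℕ) - 1) * α j ^ (s : ℕ)) * c ⟨s, i⟩ := by
            rw [Finset.sum_range]
            refine Finset.sum_congr rfl fun s _ => ?_
            rw [hQ s, heval, hder]
            simp only [Finset.mul_sum, Finset.sum_mul, ← Finset.sum_add_distrib]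
            exact Finset.sum_congr rfl fun i _ => by ring
        _ = 0 := by
            rw [← e2, ← Finset.univ_sigma_univ, Finset.sum_sigma]
end

section
/- For all positive integers D and e, setting ρ = ⌊D/e⌋, the inequality 2·e·Σ_{s=0}^{ρ} (D − s·e + 1) ≥ (D + 1)² + 2·e holds. -/
lemma stmt_8_aux (ρ r e S : ℕ) (h1 : r + 1 ≤ e) (h2 : S * 2 = (ρ + 1) * ρ)
    (h3 : 1 ≤ e * ρ + r) :
    (e * ρ + r + 1) ^ 2 + 2 * e ≤ 2 * e * (S * e + (ρ + 1) * (r + 1)) := by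
  rcases ρ with _ | ρ
  · have hS : S = 0 := by omega
    have hr1 : 1 ≤ r := by simpa using h3
    have hA2 : (r + 1) * (r + 1) ≤ (r + 1) * e := Nat.mul_le_mul_left _ h1
    have h2e : 2 * e ≤ (r + 1) * e := Nat.mul_le_mul_right _ (by omega)
    subst hS
    nlinarith
  · have h4 : (r + 1) * (r + 1) ≤ e * (r + 1) := Nat.mul_le_mul_right _ h1
    have h5 : e ≤ e * e := Nat.le_mul_of_pos_left e (by omega)
    have h6 : e * e ≤ e * e * (ρ + 1) := Nat.le_mul_of_pos_right _ (by omega)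
    nlinarith [h2, h4, h5, h6]

theorem stmt_8 (D e : ℕ) (hD : 0 < D) (he : 0 < e) :
    (D + 1) ^ 2 + 2 * e ≤
      2 * e * ∑ s ∈ Finset.range (D / e + 1), (D - s * e + 1) := by
  set ρ := D / e with hρ
  set r := D % e with hr
  have hDeq : D = e * ρ + r := by rw [hρ, hr]; exact (Nat.div_add_mod D e).symm
  have hrlt : r < e := Nat.mod_lt _ he
  have key : ∀ s ∈ Finset.range (ρ + 1), D - s * e + 1 = (ρ - s) * e + (r + 1) := by
    intro s hs
    have hs' : s ≤ ρ := by simpa [Nat.lt_succ_iff] using hs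
    have h2 : s * e ≤ ρ * e := Nat.mul_le_mul_right e hs'
    have h3 : (ρ - s) * e + s * e = ρ * e := by
      rw [← Nat.add_mul, Nat.sub_add_cancel hs']
    have h5 : e * ρ = ρ * e := Nat.mul_comm e ρ
    omega
  rw [Finset.sum_congr rfl key, Finset.sum_add_distrib, Finset.sum_const,
    Finset.card_range, smul_eq_mul]
  have hrefl : ∑ s ∈ Finset.range (ρ + 1), (ρ - s) * e
      = ∑ s ∈ Finset.range (ρ + 1), s * e := by
    rw [← Finset.sum_range_reflect]
    apply Finset.sum_congr rfl
    intro s hs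
    have hs' : s ≤ ρ := by simpa [Nat.lt_succ_iff] using hs
    congr 1
    omega
  rw [hrefl, ← Finset.sum_mul]
  have hgauss : (∑ s ∈ Finset.range (ρ + 1), s) * 2 = (ρ + 1) * ρ := by
    rw [Finset.sum_range_id_mul_two]
    simp
  calc (D + 1) ^ 2 + 2 * e = (e * ρ + r + 1) ^ 2 + 2 * e := by rw [← hDeq]
    _ ≤ 2 * e * ((∑ s ∈ Finset.range (ρ + 1), s) * e + (ρ + 1) * (r + 1)) :=
        stmt_8_aux ρ r e _ (by omega) hgauss (by omega)
end

section
/- Let F be a field and let k, b, e be integers with 0 ≤ b < k and e ≥ 1; set D = 2(k − b) − 1 and ρ = ⌊D/e⌋. Let λ₁, …, λ_k be pairwise distinct elements of F and let α_j, β_j ∈ F for j ∈ {1, …, k}. Suppose Q₀, …, Q_ρ ∈ F[X] satisfy deg Q_s ≤ D − s·e for every s, and for every j ∈ {1, …, k}: Σ_{s=0}^{ρ} Q_s(λ_j)·α_j^s = 0 and Σ_{s=1}^{ρ} s·Q_s(λ_j)·α_j^{s−1}·β_j + Σ_{s=0}^{ρ} Q_s'(λ_j)·α_j^s = 0. Let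 f ∈ F[X] have degree at most e, and suppose the number of indices j with f(λ_j) = α_j and f'(λ_j) = β_j is at least k − b. Then Σ_{s=0}^{ρ} Q_s · f^s is the zero polynomial of F[X]. -/
open Polynomial

theorem stmt_11 {F : Type*} [Field F] (k b e : ℕ) (hb0 : 0 ≤ b) (hbk : b < k)
    (he : 1 ≤ e)
    (lam : Fin k → F) (hinj : Function.Injective lam) (α β : Fin k → F)
    (Q : ℕ → F[X])
    (hdeg : ∀ s ≤ (2 * (k - b) - 1) / e,
      (Q s).degree ≤ ((2 * (k - b) - 1 - s * e : ℕ) : WithBot ℕ))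
    (hbase : ∀ j : Fin k,
      ∑ s ∈ Finset.range ((2 * (k - b) - 1) / e + 1),
        (Q s).eval (lam j) * α j ^ s = 0)
    (hext : ∀ j : Fin k,
      (∑ s ∈ Finset.Icc 1 ((2 * (k - b) - 1) / e),
          (s : F) * (Q s).eval (lam j) * α j ^ (s - 1) * β j)
        + ∑ s ∈ Finset.range ((2 * (k - b) - 1) / e + 1),
            (derivative (Q s)).eval (lam j) * α j ^ s = 0)
    (f : F[X]) (hf : f.natDegree ≤ e)
    (hagree : k - b ≤ {j : Fin k | f.eval (lam j) = α j ∧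
      (derivative f).eval (lam j) = β j}.ncard) :
    ∑ s ∈ Finset.range ((2 * (k - b) - 1) / e + 1), Q s * f ^ s = 0 := by
  classical
  set D := 2 * (k - b) - 1 with hD
  set ρ := D / e with hρ
  set P : F[X] := ∑ s ∈ Finset.range (ρ + 1), Q s * f ^ s with hP
  by_contra hne
  -- degree bound on P
  have hdegP : P.degree ≤ (D : WithBot ℕ) := by
    refine (Polynomial.degree_sum_le _ _).trans ?_
    rw [Finset.sup_le_iff]
    intro s hs
    rw [Finset.mem_range, Nat.lt_succ_iff] at hs
    have hse : s * e ≤ D := le_trans (Nat.mul_le_mul_right e hs) (Nat.div_mul_le_self D e)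
    calc (Q s * f ^ s).degree ≤ (Q s).degree + (f ^ s).degree := degree_mul_le _ _
      _ ≤ ((D - s * e : ℕ) : WithBot ℕ) + ((s * e : ℕ) : WithBot ℕ) := by
          refine add_le_add (hdeg s hs) ?_
          have hfe : f.degree ≤ (e : WithBot ℕ) :=
            degree_le_natDegree.trans (by exact_mod_cast hf)
          exact (degree_pow_le_of_le s hfe).trans (by norm_cast)
      _ = (D : WithBot ℕ) := by
          rw [← Nat.cast_add, Nat.sub_add_cancel hse]
  -- the agreement set
  set S := {j : Fin k | f.eval (lam j) = α j ∧
      (derivative f).eval (lam j) = β j}.toFinset with hS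
  have hScard : k - b ≤ S.card := by
    rwa [Set.ncard_eq_toFinset_card'] at hagree
  -- double root at each agreement point
  have hdiv : ∀ j ∈ S, (X - C (lam j)) ^ 2 ∣ P := by
    intro j hj
    rw [hS, Set.mem_toFinset] at hj
    obtain ⟨hα, hβ⟩ := hj
    have h0 : P.IsRoot (lam j) := by
      have := hbase j
      simp only [IsRoot, hP, eval_finset_sum, eval_mul, eval_pow, hα]
      exact this
    have h1 : (derivative P).IsRoot (lam j) := by
      have hx := hext j
      simp only [IsRoot, hP, derivative_sum, derivative_mul, derivative_pow,
        eval_finset_sum, eval_add, eval_mul, eval_pow, eval_C, hα, hβ]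
      rw [Finset.sum_add_distrib]
      have hins : ∀ n : ℕ, Finset.range (n + 1) = insert 0 (Finset.Icc 1 n) := by
        intro n; ext x; simp [Nat.lt_succ_iff]; omega
      have h2 : ∑ s ∈ Finset.range (ρ + 1),
          (Q s).eval (lam j) * ((s : F) * α j ^ (s - 1) * β j)
          = ∑ s ∈ Finset.Icc 1 ρ,
            (s : F) * (Q s).eval (lam j) * α j ^ (s - 1) * β j := by
        rw [hins ρ, Finset.sum_insert (by simp)]
        simp only [Nat.cast_zero, zero_mul, mul_zero, zero_add]
        exact Finset.sum_congr rfl fun s _ => by ring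
      rw [h2, add_comm]
      exact hx
    have h2 : 2 ≤ P.rootMultiplicity (lam j) :=
      (one_lt_rootMultiplicity_iff_isRoot hne).mpr ⟨h0, h1⟩
    exact (le_rootMultiplicity_iff hne).mp h2
  -- product of double roots divides P
  have hprod : (∏ j ∈ S, (X - C (lam j)) ^ 2) ∣ P := by
    refine Finset.prod_dvd_of_coprime ?_ hdiv
    intro i _ j _ hij
    exact ((pairwise_coprime_X_sub_C hinj hij).pow : IsCoprime _ _)
  -- degree comparison
  have hdegprod : (∏ j ∈ S, (X - C (lam j)) ^ 2).degree ≤ P.degree :=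
    degree_le_of_dvd hprod hne
  have hnd : (∏ j ∈ S, (X - C (lam j)) ^ 2).natDegree = 2 * S.card := by
    rw [natDegree_prod _ _ (fun i _ => pow_ne_zero _ (X_sub_C_ne_zero _))]
    simp [natDegree_pow, natDegree_X_sub_C, mul_comm]
  have hmon : (∏ j ∈ S, (X - C (lam j)) ^ 2) ≠ 0 :=
    Finset.prod_ne_zero_iff.mpr fun i _ => pow_ne_zero _ (X_sub_C_ne_zero _)
  have hdp : ((2 * S.card : ℕ) : WithBot ℕ) ≤ (D : WithBot ℕ) := by
    calc ((2 * S.card : ℕ) : WithBot ℕ)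
        = (∏ j ∈ S, (X - C (lam j)) ^ 2).degree := by
          rw [degree_eq_natDegree hmon, hnd]
      _ ≤ P.degree := hdegprod
      _ ≤ (D : WithBot ℕ) := hdegP
  have hle : 2 * S.card ≤ D := by exact_mod_cast hdp
  have hkb : 1 ≤ k - b := Nat.sub_pos_of_lt hbk
  omega
end

section
/- Let F be a field and let k, b, e be integers with 0 ≤ b < k, e ≥ 1, and k·e ≤ (k − b)². Let λ₁, …, λ_k be pairwise distinct elements of F and let α_j, β_j ∈ F for j ∈ {1, …, k}. Then the set of polynomials f ∈ F[X] of degree at most e such that the number of indices j ∈ {1, …, k} with f(λ_j) = α_j and f'(λ_j) = β_j is at least k − b is finite and has at most ⌊(2(k − b) − 1)/e⌋ elements. -/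
open Polynomial

set_option maxHeartbeats 1000000 in
theorem stmt_13 {F : Type*} [Field F] (k b e : ℕ) (hb0 : 0 ≤ b) (hbk : b < k)
    (he : 1 ≤ e) (hke : k * e ≤ (k - b) ^ 2)
    (lam : Fin k → F) (hinj : Function.Injective lam) (α β : Fin k → F) :
    {f : F[X] | f.natDegree ≤ e ∧
      k - b ≤ {j : Fin k | f.eval (lam j) = α j ∧
        (derivative f).eval (lam j) = β j}.ncard}.Finite ∧
    {f : F[X] | f.natDegree ≤ e ∧
      k - b ≤ {j : Fin k | f.eval (lam j) = α j ∧
        (derivative f).eval (lam j) = β j}.ncard}.ncard ≤ (2 * (k - b) - 1) / e := by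
  classical
  set t := k - b with ht
  have ht1 : 1 ≤ t := by omega
  have htk : t ≤ k := by omega
  have he0 : 0 < e := he
  have hte : e ≤ t := by
    have h1 : k * e ≤ k * t := le_trans hke (by nlinarith)
    exact Nat.le_of_mul_le_mul_left h1 (by omega)
  clear_value t
  set A : F[X] → Finset (Fin k) := fun f =>
    Finset.univ.filter fun j => f.eval (lam j) = α j ∧ (derivative f).eval (lam j) = β j
    with hAdef
  have hA : ∀ f : F[X],
      {j : Fin k | f.eval (lam j) = α j ∧ (derivative f).eval (lam j) = β j}.ncard
        = (A f).card := by
    intro f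
    rw [Set.ncard_eq_toFinset_card _ (Set.toFinite _)]
    congr 1
    ext j
    simp [hAdef]
  -- pairwise intersection bound
  have hpair : ∀ f g : F[X], f.natDegree ≤ e → g.natDegree ≤ e → f ≠ g →
      2 * (A f ∩ A g).card ≤ e := by
    intro f g hf hg hfg
    set h := f - g with hh
    have hne : h ≠ 0 := sub_ne_zero.mpr hfg
    have hdeg : h.natDegree ≤ e := le_trans (natDegree_sub_le f g) (by omega)
    have hsub2 : ∀ j ∈ A f ∩ A g, 2 ≤ h.roots.count (lam j) := by
      intro j hj
      simp only [Finset.mem_inter, hAdef, Finset.mem_filter] at hj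
      rw [count_roots]
      refine (one_lt_rootMultiplicity_iff_isRoot hne).mpr ⟨?_, ?_⟩
      · simp [hh, IsRoot, hj.1.2.1, hj.2.2.1]
      · simp [hh, IsRoot, derivative_sub, hj.1.2.2, hj.2.2.2]
    calc 2 * (A f ∩ A g).card = ∑ _j ∈ A f ∩ A g, 2 := by
          rw [Finset.sum_const, smul_eq_mul, mul_comm]
      _ ≤ ∑ j ∈ A f ∩ A g, h.roots.count (lam j) := Finset.sum_le_sum hsub2
      _ = ∑ x ∈ (A f ∩ A g).image lam, h.roots.count x := by
          rw [Finset.sum_image (fun a _ b _ hab => hinj hab)]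
      _ ≤ ∑ x ∈ h.roots.toFinset, h.roots.count x := by
          refine Finset.sum_le_sum_of_subset ?_
          intro x hx
          obtain ⟨j, hj, rfl⟩ := Finset.mem_image.mp hx
          exact Multiset.mem_toFinset.mpr (Multiset.count_pos.mp (by
            have := hsub2 j hj; omega))
      _ = Multiset.card h.roots := Multiset.toFinset_sum_count_eq _
      _ ≤ h.natDegree := h.card_roots'
      _ ≤ e := hdeg
  -- counting lemma
  have hcount : ∀ T : Finset F[X],
      2 * ∑ f ∈ T, (A f).card ≤ 2 * k + ∑ p ∈ T.offDiag, (A p.1 ∩ A p.2).card := by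
    intro T
    have cardA : ∀ s : Finset (Fin k), s.card = ∑ x : Fin k, if x ∈ s then 1 else 0 := by
      intro s
      rw [Finset.sum_ite_mem, Finset.univ_inter, Finset.card_eq_sum_ones]
    have h1 : ∑ f ∈ T, (A f).card = ∑ x : Fin k, (T.filter (fun f => x ∈ A f)).card := by
      simp_rw [cardA, Finset.card_filter]
      exact Finset.sum_comm
    have h2 : ∑ p ∈ T.offDiag, (A p.1 ∩ A p.2).card
        = ∑ x : Fin k, ((T.filter (fun f => x ∈ A f)).offDiag).card := by
      have hoff : ∀ x : Fin k, (T.filter (fun f => x ∈ A f)).offDiag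
          = T.offDiag.filter (fun p => x ∈ A p.1 ∧ x ∈ A p.2) := by
        intro x
        ext ⟨a, c⟩
        simp only [Finset.mem_offDiag, Finset.mem_filter]
        tauto
      simp_rw [cardA, hoff, Finset.card_filter, Finset.mem_inter]
      exact Finset.sum_comm
    have hd2 : ∀ d : ℕ, 2 * d ≤ 2 + (d * d - d) := by
      intro d
      rcases Nat.eq_zero_or_pos d with rfl | hd
      · simp
      · have hle : d ≤ d * d := Nat.le_mul_of_pos_left d hd
        zify [hle]
        nlinarith
    rw [h1, h2, Finset.mul_sum]
    calc ∑ x : Fin k, 2 * (T.filter (fun f => x ∈ A f)).card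
        ≤ ∑ x : Fin k, (2 + ((T.filter (fun f => x ∈ A f)).offDiag).card) := by
          refine Finset.sum_le_sum fun x _ => ?_
          rw [Finset.offDiag_card]
          exact hd2 _
      _ = 2 * k + ∑ x : Fin k, ((T.filter (fun f => x ∈ A f)).offDiag).card := by
          rw [Finset.sum_add_distrib, Finset.sum_const, Finset.card_univ,
            Fintype.card_fin, smul_eq_mul]
          ring
  clear_value A
  -- key cardinality bound for finsets of good polynomials
  have key : ∀ T : Finset F[X],
      (∀ f ∈ T, f.natDegree ≤ e ∧ t ≤ (A f).card) → T.card * e ≤ 2 * t - 1 := by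
    intro T hT
    by_contra hcon
    have hTe : 2 * t ≤ T.card * e := by omega
    have hdm := Nat.div_add_mod (2 * t + e - 1) e
    have hmod := Nat.mod_lt (2 * t + e - 1) he0
    set m := (2 * t + e - 1) / e with hm
    clear_value m
    have hm1 : 2 * t ≤ m * e := by
      have : e * m + (2 * t + e - 1) % e = 2 * t + e - 1 := hdm
      have hc : e * m = m * e := mul_comm _ _
      omega
    have hm2 : m * e ≤ 2 * t - 1 + e := by
      have : e * m + (2 * t + e - 1) % e = 2 * t + e - 1 := hdm
      have hc : e * m = m * e := mul_comm _ _
      omega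
    have hm3 : m ≤ T.card := by
      by_contra hmc
      have h1 : T.card ≤ m - 1 := by omega
      have h2 : T.card * e ≤ (m - 1) * e := Nat.mul_le_mul_right e h1
      have h3 : (m - 1) * e ≤ 2 * t - 1 := by
        have hm0 : 1 ≤ m := by
          rcases Nat.eq_zero_or_pos m with h | h
          · omega
          · exact h
        have : (m - 1) * e = m * e - e := by
          rw [Nat.sub_mul, one_mul]
        omega
      omega
    obtain ⟨T', hT'sub, hT'card⟩ := Finset.exists_subset_card_eq hm3
    have hsum : m * t ≤ ∑ f ∈ T', (A f).card := by
      calc m * t = ∑ _f ∈ T', t := by rw [Finset.sum_const, smul_eq_mul, hT'card]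
        _ ≤ ∑ f ∈ T', (A f).card :=
            Finset.sum_le_sum fun f hf => (hT f (hT'sub hf)).2
    have hoffsum : 2 * ∑ p ∈ T'.offDiag, (A p.1 ∩ A p.2).card ≤ (m * m - m) * e := by
      calc 2 * ∑ p ∈ T'.offDiag, (A p.1 ∩ A p.2).card
          = ∑ p ∈ T'.offDiag, 2 * (A p.1 ∩ A p.2).card := by rw [Finset.mul_sum]
        _ ≤ ∑ _p ∈ T'.offDiag, e := by
            refine Finset.sum_le_sum fun p hp => ?_
            obtain ⟨h1, h2, h3⟩ := Finset.mem_offDiag.mp hp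
            exact hpair _ _ (hT _ (hT'sub h1)).1 (hT _ (hT'sub h2)).1 h3
        _ = (m * m - m) * e := by
            rw [Finset.sum_const, smul_eq_mul, Finset.offDiag_card, hT'card]
    have hmain : 4 * (m * t) ≤ 4 * k + (m * m - m) * e := by
      have := hcount T'
      omega
    -- final contradiction via integer arithmetic
    have hm0 : 1 ≤ m := by
      rcases Nat.eq_zero_or_pos m with rfl | h
      · simp at hm1; omega
      · exact h
    have hmm : m ≤ m * m := Nat.le_mul_of_pos_left m hm0
    -- cast to ℤ
    have Hmain : (4 : ℤ) * (m * t) ≤ 4 * k + (m * m - m) * e := by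
      have h := hmain
      zify [hmm] at h
      linarith
    have Hm1 : (2 : ℤ) * t ≤ m * e := by exact_mod_cast hm1
    have Hm2 : (m : ℤ) * e ≤ 2 * t - 1 + e := by
      have h2t : 1 ≤ 2 * t := by omega
      have : (m * e : ℤ) = ((m * e : ℕ) : ℤ) := by push_cast; ring
      rw [this]
      have : ((2 * t - 1 + e : ℕ) : ℤ) = 2 * t - 1 + e := by
        push_cast [Nat.cast_sub h2t]; ring
      rw [← this]
      exact_mod_cast hm2
    have Hke : (k : ℤ) * e ≤ t ^ 2 := by exact_mod_cast hke
    have Ht1 : (1 : ℤ) ≤ t := by exact_mod_cast ht1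
    have He1 : (1 : ℤ) ≤ e := by exact_mod_cast he
    have Hm0 : (1 : ℤ) ≤ m := by exact_mod_cast hm0
    have s1 : (m : ℤ) * (m * e) ≤ m * (2 * t - 1 + e) :=
      mul_le_mul_of_nonneg_left Hm2 (by linarith)
    have s2 : 2 * (m : ℤ) * t + m ≤ 4 * k := by nlinarith
    have s3 : (2 * (m : ℤ) * t + m) * e ≤ 4 * k * e :=
      mul_le_mul_of_nonneg_right s2 (by linarith)
    have s5 : (2 : ℤ) * t * (2 * t) ≤ 2 * t * (m * e) :=
      mul_le_mul_of_nonneg_left Hm1 (by linarith)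
    nlinarith
  -- assemble
  have keyS : ∀ T : Finset F[X],
      (↑T ⊆ {f : F[X] | f.natDegree ≤ e ∧
        t ≤ {j : Fin k | f.eval (lam j) = α j ∧
          (derivative f).eval (lam j) = β j}.ncard}) → T.card ≤ (2 * t - 1) / e := by
    intro T hTsub
    rw [Nat.le_div_iff_mul_le he0]
    refine key T fun f hf => ?_
    have := hTsub hf
    rw [Set.mem_setOf_eq, hA f] at this
    exact this
  have hfin : {f : F[X] | f.natDegree ≤ e ∧
      t ≤ {j : Fin k | f.eval (lam j) = α j ∧
        (derivative f).eval (lam j) = β j}.ncard}.Finite := by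
    by_contra hinf
    obtain ⟨T, hTsub, hTcard⟩ :=
      Set.Infinite.exists_subset_card_eq hinf ((2 * t - 1) / e + 1)
    have := keyS T hTsub
    omega
  refine ⟨hfin, ?_⟩
  rw [Set.ncard_eq_toFinset_card _ hfin]
  exact keyS _ (by simp)
end
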